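/- arXiv:1904.12943 — 4 statements merged into one kernel-verified Lean document; each statement's English description precedes it below -/
import Mathlib

section
/- Let ν > 0, α ∈ ℤ with α > 0, and let R_{λ,α}(z,y) = (1/(μν))·((α−λ)/(λ+μ−α)) e^{−μ(y+z)} − (1/(ν(λ+μ−α))) e^{−αy−μz}, where μ = ν^{-1/2}√(λ + α²ν). Then the apparent pole of R_{λ,α} at λ = 0 (where μ = α) is removable: the residue lim_{λ→0} (λ + μ − α) R_{λ,α}(z,y) equals 0 for all y, z ≥ 0. -/
noncomputable section

/-- The residual part of the Stokes resolvent kernel. -/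
def Rker (ν : ℝ) (α : ℤ) (lam μ : ℂ) (z y : ℝ) : ℂ :=
  (1 / (μ * (ν : ℂ))) * (((α : ℂ) - lam) / (lam + μ - (α : ℂ))) *
      Complex.exp (-μ * ((y + z : ℝ) : ℂ))
    - (1 / ((ν : ℂ) * (lam + μ - (α : ℂ)))) *
      Complex.exp (-(α : ℂ) * (y : ℂ) - μ * (z : ℂ))

/-- `μ(λ) = ν^{-1/2}√(λ + α²ν)` (principal branch). -/
def muFun (ν : ℝ) (α : ℤ) (lam : ℂ) : ℂ :=
  ((lam + (α : ℂ) ^ 2 * (ν : ℂ)) / (ν : ℂ)) ^ ((1 : ℂ) / 2)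

/-- The apparent pole of `R_{λ,α}` at `λ = 0` is removable:
`lim_{λ→0} (λ + μ - α) R_{λ,α}(z,y) = 0`. -/
theorem residue_at_zero_vanishes (ν : ℝ) (hν : 0 < ν) (α : ℤ) (hα : 0 < α)
    (y z : ℝ) (hy : 0 ≤ y) (hz : 0 ≤ z) :
    Filter.Tendsto
      (fun lam : ℂ => (lam + muFun ν α lam - (α : ℂ)) * Rker ν α lam (muFun ν α lam) z y)
      (nhdsWithin 0 {(0 : ℂ)}ᶜ) (nhds 0) := by
  have hν0 : (ν : ℂ) ≠ 0 := by
    exact_mod_cast hν.ne'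
  have hαR : (0:ℝ) < (α : ℝ) := by exact_mod_cast hα
  have hα0 : ((α : ℂ)) ≠ 0 := by
    have : ((α:ℝ):ℂ) ≠ 0 := Complex.ofReal_ne_zero.mpr hαR.ne'
    simpa using this
  -- value of μ at 0
  have hbval : ((0:ℂ) + (α:ℂ)^2 * ν) / ν = ((((α:ℝ)^2 : ℝ)) : ℂ) := by
    push_cast
    field_simp
    ring
  have hmu0 : muFun ν α 0 = (α : ℂ) := by
    unfold muFun
    rw [hbval]
    rw [show ((1:ℂ)/2) = (((1/2 : ℝ)) : ℂ) by norm_num]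
    rw [← Complex.ofReal_cpow (sq_nonneg _)]
    have : ((α:ℝ)^2) ^ ((1:ℝ)/2) = (α:ℝ) := by
      rw [← Real.rpow_natCast (α:ℝ) 2, ← Real.rpow_mul hαR.le]
      norm_num
    rw [this]
    simp
  -- continuity of μ at 0
  have hmucont : ContinuousAt (muFun ν α) 0 := by
    unfold muFun
    apply ContinuousAt.cpow
    · exact (continuousAt_id.add continuousAt_const).div continuousAt_const hν0
    · exact continuousAt_const
    · left
      rw [hbval, Complex.ofReal_re]
      positivity
  -- μ squared
  have hsq : ∀ lam : ℂ, (muFun ν α lam) ^ 2 = (lam + (α:ℂ)^2 * ν) / ν := by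
    intro lam
    unfold muFun
    rw [show ((1:ℂ)/2) = (((2:ℕ):ℂ))⁻¹ by norm_num]
    exact Complex.cpow_nat_inv_pow _ two_ne_zero
  set c : ℂ := 2 * (α : ℂ) + 1 / ν with hc
  have hc0 : c ≠ 0 := by
    have : c = (((2 * (α:ℝ) + 1/ν : ℝ)) : ℂ) := by push_cast [hc]; ring
    rw [this]
    exact Complex.ofReal_ne_zero.mpr (by positivity)
  -- eventually g ≠ 0 on the punctured neighborhood
  have hne_c : ∀ᶠ lam in nhdsWithin (0:ℂ) {(0:ℂ)}ᶜ, lam ≠ c := by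
    apply eventually_nhdsWithin_of_eventually_nhds
    exact continuousAt_id.eventually_ne hc0.symm
  have hne_0 : ∀ᶠ lam in nhdsWithin (0:ℂ) {(0:ℂ)}ᶜ, lam ≠ 0 :=
    eventually_mem_nhdsWithin.mono (fun lam h => h)
  have hg_ne : ∀ᶠ lam in nhdsWithin (0:ℂ) {(0:ℂ)}ᶜ,
      lam + muFun ν α lam - (α:ℂ) ≠ 0 := by
    filter_upwards [hne_c, hne_0] with lam h1 h0 hg
    have hmu : muFun ν α lam = (α:ℂ) - lam := by linear_combination hg
    have h1' : ((α:ℂ) - lam)^2 = (lam + (α:ℂ)^2 * ν) / ν := by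
      rw [← hmu]; exact hsq lam
    have h2 : ((α:ℂ) - lam)^2 * ν = lam + (α:ℂ)^2 * ν := by
      field_simp at h1'
      linear_combination h1'
    have h3 : lam * ((lam - 2*(α:ℂ)) * ν - 1) = 0 := by linear_combination h2
    rcases mul_eq_zero.mp h3 with h | h
    · exact h0 h
    · apply h1
      have : lam * ν = c * ν := by
        rw [hc]
        field_simp
        linear_combination h
      exact mul_right_cancel₀ hν0 this
  -- eventually μ ≠ 0
  have hmu_ne : ∀ᶠ lam in nhdsWithin (0:ℂ) {(0:ℂ)}ᶜ, muFun ν α lam ≠ 0 := by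
    apply eventually_nhdsWithin_of_eventually_nhds
    have := hmucont.eventually_ne (by rw [hmu0]; exact hα0)
    exact this
  -- the regularized function
  set F : ℂ → ℂ := fun lam =>
    (1 / (muFun ν α lam * (ν : ℂ))) * ((α : ℂ) - lam) *
        Complex.exp (-(muFun ν α lam) * ((y + z : ℝ) : ℂ))
      - (1 / (ν : ℂ)) * Complex.exp (-(α : ℂ) * (y : ℂ) - (muFun ν α lam) * (z : ℂ))
    with hF
  have heq : ∀ᶠ lam in nhdsWithin (0:ℂ) {(0:ℂ)}ᶜ,
      (lam + muFun ν α lam - (α:ℂ)) * Rker ν α lam (muFun ν α lam) z y = F lam := by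
    filter_upwards [hg_ne, hmu_ne] with lam hg hmu
    rw [hF]
    unfold Rker
    field_simp
  -- F is continuous at 0 with value 0
  have hFcont : ContinuousAt F 0 := by
    rw [hF]
    apply ContinuousAt.sub
    · apply ContinuousAt.mul
      · apply ContinuousAt.mul
        · apply ContinuousAt.div continuousAt_const (hmucont.mul continuousAt_const)
          show muFun ν α 0 * (ν : ℂ) ≠ 0
          rw [hmu0]
          exact mul_ne_zero hα0 hν0
        · exact continuousAt_const.sub continuousAt_id
      · exact (hmucont.neg.mul continuousAt_const).cexp
    · exact continuousAt_const.mul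
        ((continuousAt_const.sub (hmucont.mul continuousAt_const)).cexp)
  have hF0 : F 0 = 0 := by
    rw [hF]
    simp only [hmu0]
    have hexp : -(α:ℂ) * ((y + z : ℝ) : ℂ) = -(α:ℂ) * (y:ℂ) - (α:ℂ) * (z:ℂ) := by
      push_cast; ring
    rw [hexp]
    field_simp
    ring
  have : Filter.Tendsto F (nhdsWithin (0:ℂ) {(0:ℂ)}ᶜ) (nhds 0) := by
    have h := hFcont.tendsto.mono_left (nhdsWithin_le_nhds (s := {(0:ℂ)}ᶜ))
    rwa [hF0] at h
  exact this.congr' (heq.mono fun lam h => h.symm)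
end
end

section
/- Let ν > 0, α ∈ ℝ with α > 0, and μ ∈ ℂ with Re μ > 0, and set λ = ν(μ² − α²). If |μ − α| ≥ α/2, then |(α−λ)/(λ+μ−α)| ≤ 1 + (1 + α/|μ−α|) · 1/|ν(μ+α)+1| ≤ 4. -/
/-- Bound on the resolvent factor: with `λ = ν(μ²-α²)` and `|μ-α| ≥ α/2`,
`|(α-λ)/(λ+μ-α)| ≤ 1 + (1 + α/|μ-α|)/|ν(μ+α)+1| ≤ 4`. -/
theorem resolvent_factor_bound (ν α : ℝ) (μ : ℂ)
    (hν : 0 < ν) (hα : 0 < α) (hμ : 0 < μ.re)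
    (h : α / 2 ≤ ‖μ - (α : ℂ)‖) :
    ‖((α : ℂ) - (ν : ℂ) * (μ ^ 2 - (α : ℂ) ^ 2)) /
        ((ν : ℂ) * (μ ^ 2 - (α : ℂ) ^ 2) + μ - (α : ℂ))‖ ≤
      1 + (1 + α / ‖μ - (α : ℂ)‖) *
        (1 / ‖(ν : ℂ) * (μ + (α : ℂ)) + 1‖) ∧
    ‖((α : ℂ) - (ν : ℂ) * (μ ^ 2 - (α : ℂ) ^ 2)) /
        ((ν : ℂ) * (μ ^ 2 - (α : ℂ) ^ 2) + μ - (α : ℂ))‖ ≤ 4 := by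
  set b : ℂ := μ - (α : ℂ) with hbdef
  set c : ℂ := (ν : ℂ) * (μ + (α : ℂ)) + 1 with hcdef
  have hb0 : 0 < ‖b‖ := lt_of_lt_of_le (by linarith) h
  have hcre : (1 : ℝ) ≤ c.re := by
    simp [hcdef, Complex.add_re, Complex.mul_re]
    nlinarith
  have hc1 : (1 : ℝ) ≤ ‖c‖ :=
    le_trans hcre (Complex.re_le_norm c)
  have hc0 : 0 < ‖c‖ := lt_of_lt_of_le one_pos hc1
  have hbc : (ν : ℂ) * (μ ^ 2 - (α : ℂ) ^ 2) + μ - (α : ℂ) = b * c := by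
    rw [hbdef, hcdef]; ring
  have hnum : (α : ℂ) - (ν : ℂ) * (μ ^ 2 - (α : ℂ) ^ 2) = μ - b * c := by
    rw [hbdef, hcdef]; ring
  have hbc0 : b * c ≠ 0 := by
    apply mul_ne_zero <;> rw [← norm_ne_zero_iff] <;> positivity
  have key : ‖((α : ℂ) - (ν : ℂ) * (μ ^ 2 - (α : ℂ) ^ 2)) /
      ((ν : ℂ) * (μ ^ 2 - (α : ℂ) ^ 2) + μ - (α : ℂ))‖ ≤
      1 + ‖μ‖ / (‖b‖ * ‖c‖) := by
    rw [hbc, hnum]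
    have : (μ - b * c) / (b * c) = μ / (b * c) - 1 := by
      rw [sub_div, div_self hbc0]
    rw [this]
    have tri := norm_add_le (μ / (b * c)) (-1)
    simp only [← sub_eq_add_neg, norm_neg, norm_one] at tri
    calc ‖μ / (b * c) - 1‖ ≤ ‖μ / (b * c)‖ + 1 := tri
      _ = 1 + ‖μ‖ / (‖b‖ * ‖c‖) := by
          rw [norm_div, norm_mul]; ring
  have hμb : ‖μ‖ ≤ ‖b‖ + α := by
    calc ‖μ‖ = ‖b + (α : ℂ)‖ := by rw [hbdef]; ring_nf
      _ ≤ ‖b‖ + ‖(α : ℂ)‖ := norm_add_le _ _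
      _ = ‖b‖ + α := by rw [Complex.norm_real, Real.norm_of_nonneg hα.le]
  have step : ‖μ‖ / (‖b‖ * ‖c‖) ≤
      (1 + α / ‖b‖) * (1 / ‖c‖) := by
    rw [div_mul_eq_div_div, mul_one_div]
    gcongr
    rw [div_le_iff₀ hb0]
    calc ‖μ‖ ≤ ‖b‖ + α := hμb
      _ = (1 + α / ‖b‖) * ‖b‖ := by field_simp
  have first : ‖((α : ℂ) - (ν : ℂ) * (μ ^ 2 - (α : ℂ) ^ 2)) /
      ((ν : ℂ) * (μ ^ 2 - (α : ℂ) ^ 2) + μ - (α : ℂ))‖ ≤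
      1 + (1 + α / ‖b‖) * (1 / ‖c‖) :=
    key.trans (by linarith)
  refine ⟨first, first.trans ?_⟩
  have h1 : α / ‖b‖ ≤ 2 := by
    rw [div_le_iff₀ hb0]; linarith
  have h2 : 1 / ‖c‖ ≤ 1 := by
    rw [div_le_one hc0]; exact hc1
  have h3 : 0 ≤ α / ‖b‖ := by positivity
  nlinarith
end

section
/- Let ν > 0, α > 0 with α²ν ≥ 1, a ≥ α/2, and let μ = a + ib for b ∈ ℝ, and λ = ν(μ² − α²). Suppose λ lies on the contour Γ₂ = {−(1/8)να² + ν(a² − b²) + 2νiab : b ∈ ℝ}, so that |λ| ≥ (1/8)α²ν. Then |α/(μ−α)| ≤ 8 + αν|μ|/|λ|, and moreover ν|μ|² ≤ 9|λ|, so that |α/(μ−α)| is bounded by a universal constant (using also α/a ≤ 2). -/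
/-- High-frequency regime `α²ν ≥ 1` on the contour `Γ₂`: with `μ = a + ib`, `a ≥ α/2`,
`λ = ν(μ²-α²)` and `|λ| ≥ α²ν/8`, one has `|α/(μ-α)| ≤ 8 + αν|μ|/|λ|`, `ν|μ|² ≤ 9|λ|`,
and hence `|α/(μ-α)|` is bounded by a universal constant. -/
theorem alpha_over_mu_minus_alpha_bound (ν α a b : ℝ) (μ lam : ℂ)
    (hν : 0 < ν) (hα : 0 < α) (h1 : 1 ≤ α ^ 2 * ν) (ha : α / 2 ≤ a)
    (hμ : μ = (a : ℂ) + (b : ℂ) * Complex.I)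
    (hlam : lam = (ν : ℂ) * (μ ^ 2 - (α : ℂ) ^ 2))
    (hlow : α ^ 2 * ν / 8 ≤ ‖lam‖) :
    ‖(α : ℂ) / (μ - (α : ℂ))‖ ≤ 8 + α * ν * ‖μ‖ / ‖lam‖ ∧
    ν * ‖μ‖ ^ 2 ≤ 9 * ‖lam‖ ∧
    ‖(α : ℂ) / (μ - (α : ℂ))‖ ≤ 26 := by
  have hαν : (0:ℝ) < α ^ 2 * ν := by positivity
  have hlampos : 0 < ‖lam‖ := lt_of_lt_of_le (by positivity) hlow
  have h8 : α ^ 2 * ν ≤ 8 * ‖lam‖ := by linarith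
  -- ν|μ|² ≤ 9|λ|
  have hmid : ν * ‖μ‖ ^ 2 ≤ 9 * ‖lam‖ := by
    have hdecomp : (ν : ℂ) * μ ^ 2 = lam + (ν : ℂ) * (α : ℂ) ^ 2 := by
      rw [hlam]; ring
    have h1' : ‖(ν : ℂ) * μ ^ 2‖ = ν * ‖μ‖ ^ 2 := by
      rw [norm_mul, norm_pow, Complex.norm_real, Real.norm_eq_abs, abs_of_pos hν]
    have h2' : ‖(ν : ℂ) * (α : ℂ) ^ 2‖ = α ^ 2 * ν := by
      rw [norm_mul, norm_pow, Complex.norm_real, Complex.norm_real, Real.norm_eq_abs, Real.norm_eq_abs,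
        abs_of_pos hν, abs_of_pos hα]; ring
    have := norm_add_le lam ((ν : ℂ) * (α : ℂ) ^ 2)
    rw [← hdecomp, h1', h2'] at this
    linarith
  -- factorization
  have habs_lam : ‖lam‖ = ν * ‖μ - α‖ * ‖μ + α‖ := by
    have : lam = (ν : ℂ) * ((μ - α) * (μ + α)) := by rw [hlam]; ring
    rw [this, norm_mul, norm_mul, Complex.norm_real, Real.norm_eq_abs, abs_of_pos hν]; ring
  have hμab : ‖μ + α‖ ≤ ‖μ‖ + α := by
    calc ‖μ + α‖ ≤ ‖μ‖ + ‖(α:ℂ)‖ :=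
          norm_add_le _ _
      _ = ‖μ‖ + α := by rw [Complex.norm_real, Real.norm_eq_abs, abs_of_pos hα]
  -- first bound
  have hfirst : ‖(α : ℂ) / (μ - (α : ℂ))‖ ≤
      8 + α * ν * ‖μ‖ / ‖lam‖ := by
    by_cases hc : μ = (α : ℂ)
    · simp [hc]
      positivity
    · have hd : 0 < ‖μ - α‖ := by
        rw [norm_pos_iff]; exact sub_ne_zero.mpr hc
      have heq : ‖(α : ℂ) / (μ - (α : ℂ))‖ =
          α * ν * ‖μ + α‖ / ‖lam‖ := by
        have he : ‖μ + α‖ ≠ 0 := by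
          intro h0
          have : μ + (α:ℂ) = 0 := by rwa [norm_eq_zero] at h0
          have : (μ + (α:ℂ)).re = 0 := by rw [this]; simp
          rw [hμ] at this
          simp at this
          linarith
        rw [norm_div, Complex.norm_real, Real.norm_eq_abs, abs_of_pos hα, habs_lam]
        field_simp
      rw [heq]
      rw [div_le_iff₀ hlampos]
      have key : α * ν * ‖μ + α‖ ≤ α * ν * ‖μ‖ + α ^ 2 * ν := by
        nlinarith [hμab, hν.le, hα.le]
      calc α * ν * ‖μ + α‖ ≤ α * ν * ‖μ‖ + 8 * ‖lam‖ := by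
            linarith
        _ = (8 + α * ν * ‖μ‖ / ‖lam‖) * ‖lam‖ := by
            field_simp; ring
  refine ⟨hfirst, hmid, ?_⟩
  -- α ≤ 2|μ|
  have haμ : a ≤ ‖μ‖ := by
    have : μ.re = a := by rw [hμ]; simp
    calc a = μ.re := this.symm
      _ ≤ |μ.re| := le_abs_self _
      _ ≤ ‖μ‖ := Complex.abs_re_le_norm μ
  have hα2μ : α ≤ 2 * ‖μ‖ := by linarith
  have h18 : α * ν * ‖μ‖ ≤ 18 * ‖lam‖ := by
    nlinarith [norm_nonneg μ, hν.le]
  have : α * ν * ‖μ‖ / ‖lam‖ ≤ 18 := by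
    rw [div_le_iff₀ hlampos]; linarith
  linarith
end

section
/- Let δ > 0, β₀ > 0, P > 1, and define the boundary layer norm ‖f‖_{σ,δ} = sup_{z∈Ω_σ} |f(z)| e^{β₀ Re z} (1 + δ^{-1} φ_P(δ^{-1}z))^{-1} with φ_P(z) = 1/(1+|Re z|^P) on the domain Ω_σ = {z ∈ ℂ : |Im z| < min{σ Re z, σ}}. If f is holomorphic on Ω_σ with ‖f‖_{σ,δ} < ∞, then for each 0 ≤ θ < σ, ∫_{∂Ω_θ} |f(z)| |dz| ≤ C ‖f‖_{σ,δ} for a constant C depending only on β₀, P, σ (and independent of δ ∈ (0,1]). In particular the boundary layer space embeds into the analytic L¹ space: ‖f‖_{L¹_σ} ≤ C ‖f‖_{σ,δ}. -/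
open MeasureTheory Set Real



/-- The pencil-shaped complex domain `Ω_σ`. -/
def pencil (σ : ℝ) : Set ℂ := {z : ℂ | |z.im| < min (σ * z.re) σ}

lemma phi_cont (P : ℝ) (hP : 1 < P) : Continuous fun y : ℝ => (1 + |y| ^ P)⁻¹ := by
  have h1 : Continuous fun y : ℝ => |y| ^ P :=
    continuous_abs.rpow_const (fun x => Or.inr (by linarith))
  refine (continuous_const.add h1).inv₀ (fun x => ?_)
  have : (0:ℝ) ≤ |x| ^ P := Real.rpow_nonneg (abs_nonneg x) P
  exact (by linarith : (0:ℝ) < 1 + |x| ^ P).ne'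

lemma phi_facts (P : ℝ) (hP : 1 < P) :
    IntegrableOn (fun y : ℝ => (1 + |y| ^ P)⁻¹) (Ioi 0) ∧
    (∫ y in Ioi (0:ℝ), (1 + |y| ^ P)⁻¹) ≤ 1 + (P - 1)⁻¹ := by
  have hc := phi_cont P hP
  have hnn : ∀ y : ℝ, 0 ≤ (1 + |y| ^ P)⁻¹ := fun y => by
    have : (0:ℝ) ≤ |y| ^ P := Real.rpow_nonneg (abs_nonneg y) P
    positivity
  have hle1 : ∀ y : ℝ, (1 + |y| ^ P)⁻¹ ≤ 1 := fun y => by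
    have : (0:ℝ) ≤ |y| ^ P := Real.rpow_nonneg (abs_nonneg y) P
    rw [inv_le_one_iff₀]; right; linarith
  have hi1 : IntegrableOn (fun y : ℝ => (1 + |y| ^ P)⁻¹) (Ioc 0 1) :=
    (hc.integrableOn_Icc (a := 0) (b := 1)).mono_set Ioc_subset_Icc_self
  have hrpow : IntegrableOn (fun y : ℝ => y ^ (-P)) (Ioi 1) :=
    integrableOn_Ioi_rpow_of_lt (by linarith) one_pos
  have hptw : ∀ y ∈ Ioi (1:ℝ), (1 + |y| ^ P)⁻¹ ≤ y ^ (-P) := by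
    intro y hy
    have hy1 : (1:ℝ) < y := hy
    have hy0 : (0:ℝ) < y := by linarith
    rw [abs_of_nonneg hy0.le, Real.rpow_neg hy0.le]
    have hp : (0:ℝ) < y ^ P := Real.rpow_pos_of_pos hy0 P
    exact inv_anti₀ hp (by linarith)
  have hi2 : IntegrableOn (fun y : ℝ => (1 + |y| ^ P)⁻¹) (Ioi 1) := by
    refine hrpow.mono' hc.aestronglyMeasurable.restrict ?_
    filter_upwards [ae_restrict_mem measurableSet_Ioi] with y hy
    rw [Real.norm_eq_abs, abs_of_nonneg (hnn y)]
    exact hptw y hy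
  have hunion : Ioc (0:ℝ) 1 ∪ Ioi 1 = Ioi 0 := Ioc_union_Ioi_eq_Ioi zero_le_one
  constructor
  · rw [← hunion]; exact hi1.union hi2
  · rw [← hunion, setIntegral_union (Ioc_disjoint_Ioi le_rfl) measurableSet_Ioi hi1 hi2]
    have b1 : (∫ y in Ioc (0:ℝ) 1, (1 + |y| ^ P)⁻¹) ≤ 1 := by
      calc (∫ y in Ioc (0:ℝ) 1, (1 + |y| ^ P)⁻¹) ≤ ∫ _ in Ioc (0:ℝ) 1, (1:ℝ) := by
            refine setIntegral_mono_on hi1 (integrableOn_const (by simp) (by simp))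
              measurableSet_Ioc (fun y _ => hle1 y)
        _ = 1 := by simp
    have b2 : (∫ y in Ioi (1:ℝ), (1 + |y| ^ P)⁻¹) ≤ (P - 1)⁻¹ := by
      calc (∫ y in Ioi (1:ℝ), (1 + |y| ^ P)⁻¹) ≤ ∫ y in Ioi (1:ℝ), y ^ (-P) :=
            setIntegral_mono_on hi2 hrpow measurableSet_Ioi hptw
        _ = -1 ^ (-P + 1) / (-P + 1) := integral_Ioi_rpow_of_lt (by linarith) one_pos
        _ = (P - 1)⁻¹ := by
            have h1 : (-P + 1 : ℝ) ≠ 0 := fun h => by linarith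
            have h2 : (P - 1 : ℝ) ≠ 0 := fun h => by linarith
            rw [Real.one_rpow, inv_eq_one_div, div_eq_div_iff h1 h2]; ring
    linarith

lemma g_facts (β₀ P : ℝ) (hβ : 0 < β₀) (hP : 1 < P) (δ : ℝ) (hδ : 0 < δ) :
    IntegrableOn (fun x : ℝ => Real.exp (-β₀ * x) * (1 + δ⁻¹ * (1 + |x / δ| ^ P)⁻¹)) (Ici 0) ∧
    (∫ x in Ici (0:ℝ), Real.exp (-β₀ * x) * (1 + δ⁻¹ * (1 + |x / δ| ^ P)⁻¹))
      ≤ β₀⁻¹ + (1 + (P - 1)⁻¹) := by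
  obtain ⟨hphi, hphiint⟩ := phi_facts P hP
  have hnn : ∀ y : ℝ, 0 ≤ (1 + |y| ^ P)⁻¹ := fun y => by
    have : (0:ℝ) ≤ |y| ^ P := Real.rpow_nonneg (abs_nonneg y) P
    positivity
  -- substitution facts
  have hsub : IntegrableOn (fun x : ℝ => (1 + |δ⁻¹ * x| ^ P)⁻¹) (Ioi 0) := by
    have := (integrableOn_Ioi_comp_mul_left_iff (fun y : ℝ => (1 + |y| ^ P)⁻¹) 0
      (inv_pos.2 hδ)).2 (by rwa [mul_zero])
    exact this
  have hsubint : (∫ x in Ioi (0:ℝ), (1 + |δ⁻¹ * x| ^ P)⁻¹)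
      = δ * ∫ y in Ioi (0:ℝ), (1 + |y| ^ P)⁻¹ := by
    rw [integral_comp_mul_left_Ioi (fun y : ℝ => (1 + |y| ^ P)⁻¹) 0 (inv_pos.2 hδ)]
    rw [mul_zero, inv_inv, smul_eq_mul]
  -- the second term
  have hw : IntegrableOn (fun x : ℝ => δ⁻¹ * (1 + |x / δ| ^ P)⁻¹) (Ioi 0) := by
    simp only [div_eq_inv_mul]
    exact hsub.const_mul _
  have hwint : (∫ x in Ioi (0:ℝ), δ⁻¹ * (1 + |x / δ| ^ P)⁻¹) ≤ 1 + (P - 1)⁻¹ := by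
    simp only [div_eq_inv_mul]
    rw [integral_const_mul, hsubint, ← mul_assoc, inv_mul_cancel₀ hδ.ne', one_mul]
    exact hphiint
  have hcont : Continuous fun x : ℝ => Real.exp (-β₀ * x) * (δ⁻¹ * (1 + |x / δ| ^ P)⁻¹) := by
    refine (Real.continuous_exp.comp (continuous_const.mul continuous_id)).mul
      (continuous_const.mul ((phi_cont P hP).comp (continuous_id.div_const δ)))
  have ht2 : IntegrableOn (fun x : ℝ => Real.exp (-β₀ * x) * (δ⁻¹ * (1 + |x / δ| ^ P)⁻¹))
      (Ioi 0) := by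
    refine hw.mono' hcont.aestronglyMeasurable.restrict ?_
    filter_upwards [ae_restrict_mem measurableSet_Ioi] with x hx
    have hx0 : (0:ℝ) < x := hx
    have he : Real.exp (-β₀ * x) ≤ 1 := by
      rw [Real.exp_le_one_iff]; nlinarith
    have hwnn : 0 ≤ δ⁻¹ * (1 + |x / δ| ^ P)⁻¹ := by
      have := hnn (x / δ); positivity
    rw [Real.norm_eq_abs, abs_of_nonneg (by positivity)]
    nlinarith [Real.exp_pos (-β₀ * x)]
  have ht2int : (∫ x in Ioi (0:ℝ), Real.exp (-β₀ * x) * (δ⁻¹ * (1 + |x / δ| ^ P)⁻¹))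
      ≤ 1 + (P - 1)⁻¹ := by
    refine le_trans (setIntegral_mono_on ht2 hw measurableSet_Ioi ?_) hwint
    intro x hx
    have hx0 : (0:ℝ) < x := hx
    have he : Real.exp (-β₀ * x) ≤ 1 := by
      rw [Real.exp_le_one_iff]; nlinarith
    have hwnn : 0 ≤ δ⁻¹ * (1 + |x / δ| ^ P)⁻¹ := by
      have := hnn (x / δ); positivity
    nlinarith
  have ht1 : IntegrableOn (fun x : ℝ => Real.exp (-β₀ * x)) (Ioi 0) :=
    exp_neg_integrableOn_Ioi 0 hβ
  have ht1int : (∫ x in Ioi (0:ℝ), Real.exp (-β₀ * x)) = β₀⁻¹ := by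
    have := integral_comp_mul_left_Ioi (fun y : ℝ => Real.exp (-y)) 0 hβ
    simp only [mul_zero, smul_eq_mul, neg_mul] at this ⊢
    rw [this, integral_exp_neg_Ioi_zero, mul_one]
  have hfe : (fun x : ℝ => Real.exp (-β₀ * x) * (1 + δ⁻¹ * (1 + |x / δ| ^ P)⁻¹))
      = fun x : ℝ => Real.exp (-β₀ * x)
        + Real.exp (-β₀ * x) * (δ⁻¹ * (1 + |x / δ| ^ P)⁻¹) := by
    funext x; ring
  constructor
  · rw [integrableOn_Ici_iff_integrableOn_Ioi, hfe]
    exact ht1.add ht2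
  · rw [integral_Ici_eq_integral_Ioi, hfe, integral_add ht1 ht2, ht1int]
    linarith

set_option maxHeartbeats 1000000 in
/-- Embedding of the boundary layer space into the analytic `L¹` space: if `f` is holomorphic
on `Ω_σ` and `|f z| ≤ M e^{-β₀ Re z}(1 + δ⁻¹ φ_P(δ⁻¹ z))` on `Ω_σ`, then for every
`0 ≤ θ < σ` the contour integral of `|f|` over `∂Ω_θ` (two slanted segments for `0 ≤ x ≤ 1`
and two horizontal rays for `x ≥ 1`) is bounded by `C M` with `C = C(β₀, P, σ)`,
uniformly in `δ ∈ (0,1]`. -/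
theorem boundary_layer_L1_embedding (β₀ P σ : ℝ)
    (hβ : 0 < β₀) (hP : 1 < P) (hσ : 0 < σ) :
    ∃ C : ℝ, 0 < C ∧ ∀ δ : ℝ, 0 < δ → δ ≤ 1 → ∀ (f : ℂ → ℂ) (M : ℝ),
      DifferentiableOn ℂ f (pencil σ) →
      (∀ z ∈ pencil σ, ‖f z‖ ≤
        M * Real.exp (-β₀ * z.re) * (1 + δ⁻¹ * (1 + |z.re / δ| ^ P)⁻¹)) →
      ∀ θ : ℝ, 0 ≤ θ → θ < σ →
        (∫ x in Set.Icc (0:ℝ) 1,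
            (‖f ((x : ℂ) * (1 + (θ : ℂ) * Complex.I))‖ +
              ‖f ((x : ℂ) * (1 - (θ : ℂ) * Complex.I))‖) *
              Real.sqrt (1 + θ ^ 2))
          + (∫ x in Set.Ici (1:ℝ),
              (‖f ((x : ℂ) + (θ : ℂ) * Complex.I)‖ +
                ‖f ((x : ℂ) - (θ : ℂ) * Complex.I)‖)) ≤ C * M := by
  set K : ℝ := β₀⁻¹ + (1 + (P - 1)⁻¹) with hKdef
  have hK : 0 < K := by
    have h1 := inv_pos.2 hβ
    have h2 := inv_pos.2 (show (0:ℝ) < P - 1 by linarith)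
    positivity
  set S : ℝ := Real.sqrt (1 + σ ^ 2) with hSdef
  have hS1 : 1 ≤ S := by
    rw [hSdef]
    nlinarith [Real.sq_sqrt (show (0:ℝ) ≤ 1 + σ ^ 2 by positivity),
      Real.sqrt_nonneg (1 + σ ^ 2)]
  have hS0 : 0 < S := by linarith
  refine ⟨4 * S * K, by positivity, ?_⟩
  intro δ hδ hδ1 f M hf hbound θ hθ0 hθσ
  set g : ℝ → ℝ := fun x => Real.exp (-β₀ * x) * (1 + δ⁻¹ * (1 + |x / δ| ^ P)⁻¹) with hgdef
  obtain ⟨hgi, hgint⟩ := g_facts β₀ P hβ hP δ hδ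
  have hgnn : ∀ x, 0 ≤ g x := fun x => by
    have : (0:ℝ) ≤ |x / δ| ^ P := Real.rpow_nonneg (abs_nonneg _) P
    have : (0:ℝ) ≤ (1 + |x / δ| ^ P)⁻¹ := by positivity
    rw [hgdef]; positivity
  -- M is nonnegative
  have hM : 0 ≤ M := by
    have h1 : (1:ℂ) ∈ pencil σ := by
      simp only [pencil, Set.mem_setOf_eq, Complex.one_im, Complex.one_re, mul_one,
        min_self, abs_zero]
      exact hσ
    have hb := (norm_nonneg (f 1)).trans (hbound 1 h1)
    by_contra hMn
    push_neg at hMn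
    have hg1 : 0 < Real.exp (-β₀ * (1:ℂ).re) * (1 + δ⁻¹ * (1 + |(1:ℂ).re / δ| ^ P)⁻¹) := by
      have : (0:ℝ) ≤ |(1:ℂ).re / δ| ^ P := Real.rpow_nonneg (abs_nonneg _) P
      have : (0:ℝ) ≤ (1 + |(1:ℂ).re / δ| ^ P)⁻¹ := by positivity
      positivity
    nlinarith
  -- the dominating function
  set G : ℝ → ℝ := fun x => 2 * M * S * g x with hGdef
  have hGnn : ∀ x, 0 ≤ G x := fun x => by
    have := hgnn x
    rw [hGdef]; positivity
  have hGi : IntegrableOn G (Set.Ici 0) := hgi.const_mul _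
  have hGint : (∫ x in Set.Ici (0:ℝ), G x) = 2 * M * S * ∫ x in Set.Ici (0:ℝ), g x := by
    rw [hGdef]; exact integral_const_mul _ _
  -- pointwise bound from the hypothesis
  have hkey : ∀ z ∈ pencil σ, ‖f z‖ ≤ M * g z.re := by
    intro z hz
    have := hbound z hz
    rw [hgdef]
    calc ‖f z‖ ≤ M * Real.exp (-β₀ * z.re) * (1 + δ⁻¹ * (1 + |z.re / δ| ^ P)⁻¹) :=
          this
      _ = M * (Real.exp (-β₀ * z.re) * (1 + δ⁻¹ * (1 + |z.re / δ| ^ P)⁻¹)) := by ring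
  -- bound the first integral
  have hseg : (∫ x in Set.Icc (0:ℝ) 1,
      (‖f ((x : ℂ) * (1 + (θ : ℂ) * Complex.I))‖ +
        ‖f ((x : ℂ) * (1 - (θ : ℂ) * Complex.I))‖) * Real.sqrt (1 + θ ^ 2))
      ≤ ∫ x in Set.Icc (0:ℝ) 1, G x := by
    refine integral_mono_of_nonneg (Filter.Eventually.of_forall fun x => by positivity)
      (hGi.mono_set Set.Icc_subset_Ici_self) ?_
    have hne : ∀ᵐ x : ℝ, x ≠ 0 := by
      rw [MeasureTheory.ae_iff]
      simp only [ne_eq, not_not, Set.setOf_eq_eq_singleton]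
      exact measure_singleton 0
    filter_upwards [ae_restrict_of_ae hne, ae_restrict_mem measurableSet_Icc] with x hx0 hx
    have hx0' : 0 < x := lt_of_le_of_ne hx.1 (Ne.symm hx0)
    have hx1 : x ≤ 1 := hx.2
    have him : |x * θ| < min (σ * x) σ := by
      rw [abs_of_nonneg (by positivity)]
      exact lt_min (by nlinarith) (by nlinarith)
    have hzp : ((x : ℂ) * (1 + (θ : ℂ) * Complex.I)) ∈ pencil σ := by
      simp only [pencil, Set.mem_setOf_eq, Complex.add_re, Complex.add_im, Complex.mul_re,
        Complex.mul_im, Complex.one_re, Complex.one_im, Complex.I_re, Complex.I_im,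
        Complex.ofReal_re, Complex.ofReal_im]
      simpa using him
    have hzm : ((x : ℂ) * (1 - (θ : ℂ) * Complex.I)) ∈ pencil σ := by
      simp only [pencil, Set.mem_setOf_eq, Complex.sub_re, Complex.sub_im, Complex.mul_re,
        Complex.mul_im, Complex.one_re, Complex.one_im, Complex.I_re, Complex.I_im,
        Complex.ofReal_re, Complex.ofReal_im]
      simpa [abs_neg] using him
    have hrep : ((x : ℂ) * (1 + (θ : ℂ) * Complex.I)).re = x := by simp
    have hrem : ((x : ℂ) * (1 - (θ : ℂ) * Complex.I)).re = x := by simp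
    have hbp := hkey _ hzp
    have hbm := hkey _ hzm
    rw [hrep] at hbp
    rw [hrem] at hbm
    have hsq : Real.sqrt (1 + θ ^ 2) ≤ S := by
      rw [hSdef]; exact Real.sqrt_le_sqrt (by nlinarith)
    have h2 : ‖f ((x : ℂ) * (1 + (θ : ℂ) * Complex.I))‖ +
        ‖f ((x : ℂ) * (1 - (θ : ℂ) * Complex.I))‖ ≤ 2 * M * g x := by linarith
    calc (‖f ((x : ℂ) * (1 + (θ : ℂ) * Complex.I))‖ +
          ‖f ((x : ℂ) * (1 - (θ : ℂ) * Complex.I))‖) * Real.sqrt (1 + θ ^ 2)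
        ≤ (2 * M * g x) * S := by
          refine mul_le_mul h2 hsq (Real.sqrt_nonneg _) ?_
          have := hgnn x; positivity
      _ = G x := by rw [hGdef]; ring
  have hseg2 : (∫ x in Set.Icc (0:ℝ) 1, G x) ≤ ∫ x in Set.Ici (0:ℝ), G x :=
    setIntegral_mono_set hGi (Filter.Eventually.of_forall hGnn)
      (HasSubset.Subset.eventuallyLE Set.Icc_subset_Ici_self)
  -- bound the second integral
  have hray : (∫ x in Set.Ici (1:ℝ),
      (‖f ((x : ℂ) + (θ : ℂ) * Complex.I)‖ +
        ‖f ((x : ℂ) - (θ : ℂ) * Complex.I)‖))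
      ≤ ∫ x in Set.Ici (1:ℝ), G x := by
    refine integral_mono_of_nonneg (Filter.Eventually.of_forall fun x => by positivity)
      (hGi.mono_set (Set.Ici_subset_Ici.2 zero_le_one)) ?_
    filter_upwards [ae_restrict_mem measurableSet_Ici] with x hx
    have hx1 : (1:ℝ) ≤ x := hx
    have him : |θ| < min (σ * x) σ := by
      rw [abs_of_nonneg hθ0]
      exact lt_min (by nlinarith) hθσ
    have hzp : ((x : ℂ) + (θ : ℂ) * Complex.I) ∈ pencil σ := by
      simp only [pencil, Set.mem_setOf_eq, Complex.add_re, Complex.add_im, Complex.mul_re,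
        Complex.mul_im, Complex.I_re, Complex.I_im, Complex.ofReal_re, Complex.ofReal_im]
      simpa using him
    have hzm : ((x : ℂ) - (θ : ℂ) * Complex.I) ∈ pencil σ := by
      simp only [pencil, Set.mem_setOf_eq, Complex.sub_re, Complex.sub_im, Complex.mul_re,
        Complex.mul_im, Complex.I_re, Complex.I_im, Complex.ofReal_re, Complex.ofReal_im]
      simpa [abs_neg] using him
    have hrep : ((x : ℂ) + (θ : ℂ) * Complex.I).re = x := by simp
    have hrem : ((x : ℂ) - (θ : ℂ) * Complex.I).re = x := by simp
    have hbp := hkey _ hzp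
    have hbm := hkey _ hzm
    rw [hrep] at hbp
    rw [hrem] at hbm
    have h2 : ‖f ((x : ℂ) + (θ : ℂ) * Complex.I)‖ +
        ‖f ((x : ℂ) - (θ : ℂ) * Complex.I)‖ ≤ 2 * M * g x := by linarith
    have : 2 * M * g x ≤ 2 * M * S * g x := by
      nlinarith [mul_nonneg (mul_nonneg (show (0:ℝ) ≤ 2 * M by linarith) (hgnn x))
        (show (0:ℝ) ≤ S - 1 by linarith)]
    calc ‖f ((x : ℂ) + (θ : ℂ) * Complex.I)‖ +
        ‖f ((x : ℂ) - (θ : ℂ) * Complex.I)‖ ≤ 2 * M * S * g x := by linarith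
      _ = G x := by rw [hGdef]
  have hray2 : (∫ x in Set.Ici (1:ℝ), G x) ≤ ∫ x in Set.Ici (0:ℝ), G x :=
    setIntegral_mono_set hGi (Filter.Eventually.of_forall hGnn)
      (HasSubset.Subset.eventuallyLE (Set.Ici_subset_Ici.2 zero_le_one))
  have hfinal : (∫ x in Set.Ici (0:ℝ), G x) ≤ 2 * M * S * K := by
    rw [hGint]
    have h0 : 0 ≤ 2 * M * S := by positivity
    exact mul_le_mul_of_nonneg_left hgint h0
  nlinarith [hseg.trans hseg2, hray.trans hray2, hM, hS0, hK]
end
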